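/- Let $k$ be a field, $q \in k$ a primitive $N$-th root of unity with $N$ odd, $N > 1$, and let $q_{kl}$ satisfy the Cartan-type conditions $q_{ll} = q$, $q_{l,l+1} q_{l+1,l} = q^{-1}$, and $q_{kl} q_{lk} = 1$ for $|k-l| \geq 2$. In the algebra $R_{(1)}$ generated by $x_i, \dots, x_{j-1}$ with relations $x_l x_{l+1} = q_{l,l+1} x_{l+1} x_l$ for all consecutive $l$ and $x_k x_l = q_{kl} x_l x_k$ for $|k-l| \geq 2$, the reverse root vector $x_{ji}$ (defined by $x_{i+1,i} = x_i$ and $x_{ji} = [x_{j-1}, x_{j-1,i}]_c$) satisfies $x_{ji} = (q-1)^{j-i-1} \big(\prod_{i \leq k < l < j} q_{lk}\big)\, x_i x_{i+1} \cdots x_{j-1}$. -/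

import Mathlib

/-- The reverse root vector `x_{ji}` (first argument `j`, second `i`, `i < j`):
`x_{i+1,i} = x_i` and, for `j - i ≥ 2`,
`x_{ji} = [x_{j-1}, x_{j-1,i}]_c
        = x_{j-1} x_{j-1,i} - (q_{j-1,i} q_{j-1,i+1} ⋯ q_{j-1,j-2}) • x_{j-1,i} x_{j-1}`. -/
def revRootVec {k A : Type*} [CommRing k] [Ring A] [Algebra k A]
    (x : ℕ → A) (Q : ℕ → ℕ → k) : ℕ → ℕ → A
  | j, i =>
    if j ≤ i + 1 then x i
    else x (j - 1) * revRootVec x Q (j - 1) i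
      - (∏ p ∈ Finset.Ico i (j - 1), Q (j - 1) p) • (revRootVec x Q (j - 1) i * x (j - 1))
  termination_by j i => j - i
  decreasing_by all_goals omega

/-- Let `q` be a primitive `N`-th root of unity, `N` odd, `N > 1`,
and `(q_{kl})` of Cartan type: `q_{ll} = q`, `q_{l,l+1} q_{l+1,l} = q⁻¹`,
`q_{kl} q_{lk} = 1` for `|k-l| ≥ 2`.  In any algebra with elements `x_i, …, x_{j-1}`
satisfying the relations of `R_{(1)}`, namely `x_l x_{l+1} = q_{l,l+1} x_{l+1} x_l`
for consecutive indices and `x_k x_l = q_{kl} x_l x_k` for `|k-l| ≥ 2`, the reverse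
root vector satisfies
`x_{ji} = (q-1)^{j-i-1} (∏_{i ≤ k < l < j} q_{lk}) x_i x_{i+1} ⋯ x_{j-1}`. -/
theorem stmt_8 {k A : Type*} [Field k] [Ring A] [Algebra k A]
    (N : ℕ) (hNodd : Odd N) (hN1 : 1 < N) (q : k) (hq : IsPrimitiveRoot q N)
    (i j : ℕ) (hij : i < j) (Q : ℕ → ℕ → k)
    (hQdiag : ∀ l, i ≤ l → l ≤ j - 1 → Q l l = q)
    (hQ1 : ∀ a b, i ≤ a → a ≤ j - 1 → i ≤ b → b ≤ j - 1 → (a + 1 = b ∨ b + 1 = a) →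
      Q a b * Q b a = q⁻¹)
    (hQ2 : ∀ a b, i ≤ a → a ≤ j - 1 → i ≤ b → b ≤ j - 1 → (a + 2 ≤ b ∨ b + 2 ≤ a) →
      Q a b * Q b a = 1)
    (x : ℕ → A)
    (hrel1 : ∀ l, i ≤ l → l + 2 ≤ j → x l * x (l + 1) = Q l (l + 1) • (x (l + 1) * x l))
    (hrel2 : ∀ a b, i ≤ a → a ≤ j - 1 → i ≤ b → b ≤ j - 1 → (a + 2 ≤ b ∨ b + 2 ≤ a) →
      x a * x b = Q a b • (x b * x a)) :
    revRootVec x Q j i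
      = ((q - 1) ^ (j - i - 1) * ∏ b ∈ Finset.Ioo i j, ∏ a ∈ Finset.Ico i b, Q b a) •
        ((List.range' i (j - i)).map x).prod := by
  have hNpos : (N : ℕ) ≠ 0 := by omega
  have hq0 : q ≠ 0 := hq.ne_zero hNpos
  revert hQdiag hQ1 hQ2 hrel1 hrel2
  induction j, hij using Nat.le_induction with
  | base =>
    intro _ _ _ _ _
    rw [revRootVec]
    have h1 : Finset.Ioo i (i + 1) = ∅ := by ext m; simp
    simp [h1, show i + 1 - i = 1 from by omega]
  | succ n hn ih =>
    intro hQdiag hQ1 hQ2 hrel1 hrel2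
    obtain ⟨m, rfl⟩ : ∃ m, n = m + 1 := ⟨n - 1, by omega⟩
    set n := m + 1 with hndef
    have him : i ≤ m := by omega
    -- instantiate IH
    have ihn := ih (fun l h1 h2 => hQdiag l h1 (by omega))
      (fun a b h1 h2 h3 h4 h5 => hQ1 a b h1 (by omega) h3 (by omega) h5)
      (fun a b h1 h2 h3 h4 h5 => hQ2 a b h1 (by omega) h3 (by omega) h5)
      (fun l h1 h2 => hrel1 l h1 (by omega))
      (fun a b h1 h2 h3 h4 h5 => hrel2 a b h1 (by omega) h3 (by omega) h5)
    -- swap single element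
    have hswap : ∀ t, i ≤ t → t < n → x n * x t =
        (if t + 1 = n then q * Q n t else Q n t) • (x t * x n) := by
      intro t ht htn
      by_cases h : t + 1 = n
      · rw [if_pos h]
        have h1 := hrel1 t ht (by omega)
        have h2 := hQ1 t (t + 1) ht (by omega) (by omega) (by omega) (Or.inl rfl)
        rw [h] at h1 h2
        rw [h1, smul_smul]
        have h3 : q * Q n t * Q t n = 1 := by
          rw [mul_assoc, mul_comm (Q n t), h2, mul_inv_cancel₀ hq0]
        rw [h3, one_smul]
      · rw [if_neg h]
        exact hrel2 n t (by omega) (by omega) ht (by omega) (Or.inr (by omega))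
    -- key lemma: move x n across a product
    have key : ∀ len t, i ≤ t → t + len = n →
        x n * ((List.range' t len).map x).prod =
        (∏ p ∈ Finset.Ico t n, (if p + 1 = n then q * Q n p else Q n p)) •
          (((List.range' t len).map x).prod * x n) := by
      intro len
      induction len with
      | zero =>
        intro t _ hteq
        simp [show t = n from by omega, Finset.Ico_self]
      | succ len ihl =>
        intro t ht hteq
        rw [List.range'_succ, List.map_cons, List.prod_cons, ← mul_assoc,
          hswap t ht (by omega), smul_mul_assoc, mul_assoc,
          ihl (t + 1) (by omega) (by omega), mul_smul_comm, smul_smul,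
          Finset.prod_eq_prod_Ico_succ_bot (show t < n from by omega), mul_assoc]
    -- product of swap factors
    have hprodswap : (∏ p ∈ Finset.Ico i n, (if p + 1 = n then q * Q n p else Q n p))
        = q * ∏ p ∈ Finset.Ico i n, Q n p := by
      rw [Finset.prod_Ico_succ_top him, Finset.prod_Ico_succ_top him, if_pos rfl]
      rw [Finset.prod_congr rfl (fun p hp => by
        rw [if_neg]; simp at hp; omega)]
      ring
    -- unfold revRootVec at n+1
    rw [revRootVec, if_neg (by omega)]
    simp only [Nat.add_sub_cancel]
    rw [ihn]
    rw [mul_smul_comm, key (n - i) i (by omega) (by omega), hprodswap,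
      smul_mul_assoc, smul_smul, smul_smul, ← sub_smul]
    -- now handle RHS
    have hsplitP : ((List.range' i (n + 1 - i)).map x).prod =
        ((List.range' i (n - i)).map x).prod * x n := by
      rw [show n + 1 - i = (n - i) + 1 from by omega, List.range'_1_concat,
        List.map_append, List.prod_append, show i + (n - i) = n from by omega]
      simp
    rw [hsplitP]
    congr 1
    rw [← Finset.Ico_add_one_left_eq_Ioo, ← Finset.Ico_add_one_left_eq_Ioo,
      Finset.prod_Ico_succ_top (by omega : i + 1 ≤ n)]
    rw [show n + 1 - i - 1 = (n - i - 1) + 1 from by omega, pow_succ]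
    ring
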